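/- For every n₁ ≥ 0 and n₂ ≥ 0 with n₁ + n₂ ≥ 2, there exists a minimally rigid graph on n₁ vertices of type 1 and n₂ vertices of type 2. -/

import Mathlib

open SimpleGraph

variable {V : Type*}

/-- Number of type-1 vertices in a vertex set. -/
noncomputable def n1 (t1 : V → Prop) (S : Set V) : ℕ := {v ∈ S | t1 v}.ncard

/-- Number of type-2 vertices in a vertex set. -/
noncomputable def n2 (t1 : V → Prop) (S : Set V) : ℕ := {v ∈ S | ¬ t1 v}.ncard

/-- Number of edges of `G` with both endpoints in `S`. -/
noncomputable def edgesIn (G : SimpleGraph V) (S : Set V) : ℕ :=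
  {e ∈ G.edgeSet | ∀ v ∈ e, v ∈ S}.ncard

/-- Sparsity: every subgraph on `n' ≥ 2` vertices has at most
`n₁' + 2 n₂' + min 0 (n₁' - 3)` edges. -/
def Sparse (G : SimpleGraph V) (t1 : V → Prop) : Prop :=
  ∀ S : Set V, 2 ≤ S.ncard →
    (edgesIn G S : ℤ) ≤ (n1 t1 S : ℤ) + 2 * n2 t1 S + min 0 ((n1 t1 S : ℤ) - 3)

/-- Minimal rigidity: either one vertex, or sparse with exactly
`n₁ + 2 n₂ + min 0 (n₁ - 3)` edges. -/
def MinRigid (G : SimpleGraph V) (t1 : V → Prop) : Prop :=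
  Nat.card V = 1 ∨
    (Sparse G t1 ∧
      (G.edgeSet.ncard : ℤ) = (n1 t1 Set.univ : ℤ) + 2 * n2 t1 Set.univ +
        min 0 ((n1 t1 Set.univ : ℤ) - 3))

/-- Rigidity: contains a spanning minimally rigid subgraph. -/
def Rigid (G : SimpleGraph V) (t1 : V → Prop) : Prop :=
  ∃ H : SimpleGraph V, H ≤ G ∧ MinRigid H t1

/-- A rigid block: a vertex-induced rigid subgraph, identified with its vertex set. -/
def RigidBlock (G : SimpleGraph V) (t1 : V → Prop) (S : Set V) : Prop :=
  Rigid (G.induce S) (fun v => t1 ↑v)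


section Aux

variable {n : ℕ}

/-! ### Generic counting lemmas -/

lemma card_le_two_of_val (T : Finset (Fin n)) (x y : ℕ)
    (h : ∀ i ∈ T, (i : ℕ) = x ∨ (i : ℕ) = y) : T.card ≤ 2 := by
  have hle : T.card ≤ ({x, y} : Finset ℕ).card := by
    apply Finset.card_le_card_of_injOn Fin.val
    · intro a ha; simpa using h a ha
    · exact fun a _ b _ hab => Fin.ext hab
  calc T.card ≤ ({x, y} : Finset ℕ).card := hle
    _ ≤ 2 := Finset.card_insert_le _ _ |>.trans (by simp)

lemma card_le_one_of_val (T : Finset (Fin n)) (x : ℕ) (h : ∀ i ∈ T, (i : ℕ) = x) :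
    T.card ≤ 1 := by
  have hle : T.card ≤ ({x} : Finset ℕ).card := by
    apply Finset.card_le_card_of_injOn Fin.val
    · intro a ha; simpa using h a ha
    · exact fun a _ b _ hab => Fin.ext hab
  simpa using hle

lemma filter_lt_card (m : ℕ) (hm : m ≤ n) :
    (Finset.univ.filter fun v : Fin n => (v : ℕ) < m).card = m := by
  rw [← Finset.card_range m]
  apply Finset.card_nbij Fin.val
  · intro a ha; simp at ha ⊢; omega
  · exact fun a _ b _ hab => Fin.ext hab
  · intro x hx
    simp only [Finset.coe_range, Set.mem_Iio] at hx
    exact ⟨⟨x, lt_of_lt_of_le hx hm⟩, by simp [hx], rfl⟩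

lemma fromRel_adj_of_lt (rel : Fin n → Fin n → Prop) (hrel : ∀ i j, rel i j → i < j)
    {i j : Fin n} (hij : i < j) : (SimpleGraph.fromRel rel).Adj i j ↔ rel i j := by
  rw [SimpleGraph.fromRel_adj]
  constructor
  · rintro ⟨-, h | h⟩
    · exact h
    · exact absurd (hrel _ _ h) (asymm hij)
  · exact fun h => ⟨hij.ne, Or.inl h⟩

lemma fib_congr (rel : Fin n → Fin n → Prop) [DecidableRel rel] (G : SimpleGraph (Fin n))
    [DecidableRel G.Adj] (hadj : ∀ i j : Fin n, i < j → (G.Adj i j ↔ rel i j))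
    (S : Finset (Fin n)) (j : Fin n) :
    S.filter (fun i => i < j ∧ G.Adj i j) = S.filter (fun i => i < j ∧ rel i j) :=
  Finset.filter_congr fun i _ => and_congr_right fun h => hadj _ _ h

/-! ### Relating `edgesIn`, `n1`, `n2` to finset counts -/

lemma n1_coe (t1 : Fin n → Prop) [DecidablePred t1] (T : Finset (Fin n)) :
    n1 t1 ↑T = (T.filter t1).card := by
  rw [n1, ← Set.ncard_coe_finset]; congr 1; ext v; simp

lemma n2_coe (t1 : Fin n → Prop) [DecidablePred t1] (T : Finset (Fin n)) :
    n2 t1 ↑T = (T.filter fun v => ¬ t1 v).card := by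
  rw [n2, ← Set.ncard_coe_finset]; congr 1; ext v; simp

lemma edgesIn_univ_eq (G : SimpleGraph (Fin n)) : G.edgeSet.ncard = edgesIn G Set.univ := by
  rw [edgesIn]; congr 1; ext e; simp

lemma edgesIn_eq (G : SimpleGraph (Fin n)) [DecidableRel G.Adj] (S : Finset (Fin n)) :
    edgesIn G ↑S = ∑ j ∈ S, (S.filter fun i => i < j ∧ G.Adj i j).card := by
  classical
  have himg : {e ∈ G.edgeSet | ∀ v ∈ e, v ∈ (↑S : Set (Fin n))} =
      (fun p : Fin n × Fin n => s(p.1, p.2)) ''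
        ↑(Finset.univ.filter fun p : Fin n × Fin n =>
            p.1 < p.2 ∧ G.Adj p.1 p.2 ∧ p.1 ∈ S ∧ p.2 ∈ S) := by
    ext e
    refine e.ind (fun a b => ?_)
    simp only [Set.mem_setOf_eq, Set.mem_image, Finset.coe_filter, Finset.mem_univ,
      true_and, Set.mem_setOf_eq, SimpleGraph.mem_edgeSet, Sym2.mem_iff, Finset.mem_coe]
    constructor
    · rintro ⟨hab, hmem⟩
      rcases lt_or_gt_of_ne hab.ne with hlt | hgt
      · exact ⟨(a, b), ⟨hlt, hab, hmem _ (Or.inl rfl), hmem _ (Or.inr rfl)⟩, rfl⟩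
      · exact ⟨(b, a), ⟨hgt, hab.symm, hmem _ (Or.inr rfl), hmem _ (Or.inl rfl)⟩,
          Sym2.eq_swap⟩
    · rintro ⟨⟨x, y⟩, ⟨hxy, hadj, hx, hy⟩, heq⟩
      simp only at heq hadj hx hy hxy
      rcases Sym2.eq_iff.mp heq with ⟨rfl, rfl⟩ | ⟨rfl, rfl⟩
      · exact ⟨hadj, fun v hv => by rcases hv with rfl | rfl <;> assumption⟩
      · exact ⟨hadj.symm, fun v hv => by rcases hv with rfl | rfl <;> assumption⟩
  rw [edgesIn, himg, Set.ncard_image_of_injOn, Set.ncard_coe_finset]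
  · rw [Finset.card_eq_sum_card_fiberwise (f := Prod.snd) (t := S)
      (fun p hp => by simp at hp; exact hp.2.2.2)]
    refine Finset.sum_congr rfl fun j hj => ?_
    refine Finset.card_nbij (fun p => p.1) (fun p hp => ?_) ?_ ?_
    · simp only [Finset.mem_coe, Finset.mem_filter, Finset.mem_univ, true_and] at hp ⊢
      obtain ⟨⟨h1, h2, h3, h4⟩, h5⟩ := hp
      subst h5
      exact ⟨h3, h1, h2⟩
    · rintro ⟨a, b⟩ ha ⟨c, d⟩ hc hac
      simp only [Finset.mem_coe, Finset.mem_filter] at ha hc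
      simp only at hac
      obtain rfl := ha.2
      obtain rfl := hc.2
      simp [hac]
    · rintro i hi
      simp only [Finset.coe_filter, Set.mem_setOf_eq, Finset.mem_coe, Finset.mem_filter] at hi ⊢
      exact ⟨(i, j), ⟨⟨Finset.mem_univ _, hi.2.1, hi.2.2, hi.1, hj⟩, rfl⟩, rfl⟩
  · rintro ⟨a, b⟩ ha ⟨c, d⟩ hc heq
    simp only [Finset.mem_coe, Finset.mem_filter, Finset.mem_univ, true_and] at ha hc
    rcases Sym2.eq_iff.mp heq with ⟨rfl, rfl⟩ | ⟨rfl, rfl⟩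
    · rfl
    · exact absurd (ha.1.trans hc.1) (lt_irrefl _)

lemma sparse_of (G : SimpleGraph (Fin n)) [DecidableRel G.Adj] (t1 : Fin n → Prop)
    [DecidablePred t1]
    (h : ∀ T : Finset (Fin n), 2 ≤ T.card →
      ((∑ j ∈ T, (T.filter fun i => i < j ∧ G.Adj i j).card : ℕ) : ℤ) ≤
        ((T.filter t1).card : ℤ) + 2 * (T.filter fun v => ¬ t1 v).card +
          min 0 (((T.filter t1).card : ℤ) - 3)) : Sparse G t1 := by
  intro S hS
  have hfin : S.Finite := Set.toFinite S
  have hco : ↑hfin.toFinset = S := hfin.coe_toFinset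
  have hcard : S.ncard = hfin.toFinset.card := Set.ncard_eq_toFinset_card S hfin
  rw [← hco, edgesIn_eq, n1_coe, n2_coe]
  push_cast
  exact_mod_cast h hfin.toFinset (by omega)

/-! ### Case `n₁ ≤ 2`: a Laman strip graph -/

def relA (n : ℕ) : Fin n → Fin n → Prop :=
  fun i j => (j : ℕ) = (i : ℕ) + 1 ∨ (j : ℕ) = (i : ℕ) + 2

instance : DecidableRel (relA n) := fun i j => by unfold relA; infer_instance

lemma relA_lt : ∀ i j : Fin n, relA n i j → i < j := by
  intro i j h; rw [Fin.lt_def]; rcases h with h | h <;> omega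

lemma caseA_bound (G : SimpleGraph (Fin n)) [DecidableRel G.Adj]
    (hadj : ∀ i j : Fin n, i < j → (G.Adj i j ↔ relA n i j))
    (T : Finset (Fin n)) (hT : 2 ≤ T.card) :
    ∑ j ∈ T, (T.filter fun i => i < j ∧ G.Adj i j).card
      ≤ 2 * T.card - 3 := by
  set f := fun j => (T.filter fun i => i < j ∧ G.Adj i j).card with hf
  have hne : T.Nonempty := Finset.card_pos.mp (by omega)
  set a := T.min' hne with ha
  have haT : a ∈ T := T.min'_mem hne
  have hT'ne : (T.erase a).Nonempty := by
    rw [← Finset.card_pos, Finset.card_erase_of_mem haT]; omega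
  set b := (T.erase a).min' hT'ne with hb
  have hbT' : b ∈ T.erase a := Finset.min'_mem _ _
  have hbT : b ∈ T := (Finset.mem_erase.mp hbT').2
  have hfa : f a = 0 := by
    rw [hf]
    simp only [Finset.card_eq_zero, Finset.filter_eq_empty_iff]
    rintro i hi ⟨hlt, -⟩
    exact absurd (T.min'_le i hi) (not_le.mpr hlt)
  have hfb : f b ≤ 1 := by
    rw [hf]
    apply Finset.card_le_one.mpr
    intro i hi j hj
    simp only [Finset.mem_filter] at hi hj
    have key : ∀ x : Fin n, x ∈ T → x < b → x = a := by
      intro x hx hxb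
      by_contra hxa
      exact absurd ((T.erase a).min'_le x (Finset.mem_erase.mpr ⟨hxa, hx⟩))
        (not_le.mpr hxb)
    rw [key i hi.1 hi.2.1, key j hj.1 hj.2.1]
  have hall : ∀ j ∈ T, f j ≤ 2 := by
    intro j _
    apply card_le_two_of_val _ ((j : ℕ) - 1) ((j : ℕ) - 2)
    intro i hi
    simp only [Finset.mem_filter] at hi
    have := (hadj _ _ hi.2.1).mp hi.2.2
    unfold relA at this
    rw [Fin.lt_def] at hi
    rcases this with h | h <;> omega
  have e1 : ∑ j ∈ T, f j = f a + ∑ j ∈ T.erase a, f j := (Finset.add_sum_erase T f haT).symm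
  have e2 : ∑ j ∈ T.erase a, f j = f b + ∑ j ∈ (T.erase a).erase b, f j :=
    (Finset.add_sum_erase _ f hbT').symm
  have e3 : ∑ j ∈ (T.erase a).erase b, f j ≤ ((T.erase a).erase b).card * 2 := by
    have := Finset.sum_le_card_nsmul ((T.erase a).erase b) f 2
      (fun x hx => hall x (Finset.mem_of_mem_erase (Finset.mem_of_mem_erase hx)))
    simpa using this
  have e4 : ((T.erase a).erase b).card = T.card - 2 := by
    rw [Finset.card_erase_of_mem hbT', Finset.card_erase_of_mem haT]
    omega
  have e0 : T.sum f = ∑ j ∈ T, f j := rfl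
  omega

lemma sum_min_two : ∀ m : ℕ, 2 ≤ m → ∑ j ∈ Finset.range m, min 2 j = 2 * m - 3 := by
  intro m hm
  induction m, hm using Nat.le_induction with
  | base => decide
  | succ m hm ih =>
    rw [Finset.sum_range_succ, ih]
    have : min 2 m = 2 := min_eq_left (by omega)
    omega

lemma caseA_total (G : SimpleGraph (Fin n)) [DecidableRel G.Adj]
    (hadj : ∀ i j : Fin n, i < j → (G.Adj i j ↔ relA n i j)) (hn : 2 ≤ n) :
    ∑ j : Fin n,
      (Finset.univ.filter fun i => i < j ∧ G.Adj i j).card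
      = 2 * n - 3 := by
  have hfibc : ∀ j, (Finset.univ.filter fun i => i < j ∧ G.Adj i j) =
      (Finset.univ.filter fun i => i < j ∧ relA n i j) := fib_congr _ G hadj Finset.univ
  have hfib : ∀ j : Fin n,
      (Finset.univ.filter fun i => i < j ∧ G.Adj i j).card
        = min 2 (j : ℕ) := by
    intro j
    rw [hfibc j]
    by_cases h0 : (j : ℕ) = 0
    · rw [show min 2 (j : ℕ) = 0 by omega, Finset.card_eq_zero, Finset.filter_eq_empty_iff]
      rintro i - ⟨hlt, -⟩
      rw [Fin.lt_def] at hlt; omega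
    · by_cases h1 : (j : ℕ) = 1
      · have : (Finset.univ.filter fun i => i < j ∧ relA n i j)
            = {(⟨0, by omega⟩ : Fin n)} := by
          ext i
          simp only [Finset.mem_filter, Finset.mem_univ, true_and, Finset.mem_singleton,
            relA, Fin.ext_iff, Fin.lt_def]
          omega
        rw [this]; simp; omega
      · have h2 : 2 ≤ (j : ℕ) := by omega
        have : (Finset.univ.filter fun i => i < j ∧ relA n i j)
            = {(⟨(j : ℕ) - 1, by omega⟩ : Fin n), ⟨(j : ℕ) - 2, by omega⟩} := by
          ext i
          simp only [Finset.mem_filter, Finset.mem_univ, true_and, Finset.mem_insert,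
            Finset.mem_singleton, relA, Fin.ext_iff, Fin.lt_def]
          omega
        rw [this, Finset.card_insert_of_notMem (by simp [Fin.ext_iff]; omega),
          Finset.card_singleton]
        omega
  calc ∑ j : Fin n, (Finset.univ.filter fun i => i < j ∧ G.Adj i j).card
      = ∑ j : Fin n, min 2 (j : ℕ) := Finset.sum_congr rfl fun j _ => hfib j
    _ = ∑ j ∈ Finset.range n, min 2 j := Fin.sum_univ_eq_sum_range _ n
    _ = 2 * n - 3 := sum_min_two n hn

/-! ### Case `n₁ ≥ 3`: a cycle plus degree-2 vertices -/

def relB (n₁ : ℕ) {n : ℕ} : Fin n → Fin n → Prop := fun i j =>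
  ((j : ℕ) < n₁ ∧ ((j : ℕ) = (i : ℕ) + 1 ∨ ((i : ℕ) = 0 ∧ (j : ℕ) = n₁ - 1))) ∨
    (n₁ ≤ (j : ℕ) ∧ (i : ℕ) < 2)

instance {n₁ : ℕ} : DecidableRel (relB n₁ (n := n)) := fun i j => by unfold relB; infer_instance

lemma relB_lt {n₁ : ℕ} (h3 : 3 ≤ n₁) : ∀ i j : Fin n, relB n₁ i j → i < j := by
  intro i j h; rw [Fin.lt_def]
  rcases h with ⟨h1, h2 | ⟨h2, h3'⟩⟩ | ⟨h1, h2⟩ <;> omega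

lemma caseB_bound {n₁ : ℕ} (h3 : 3 ≤ n₁) (G : SimpleGraph (Fin n)) [DecidableRel G.Adj]
    (hadj : ∀ i j : Fin n, i < j → (G.Adj i j ↔ relB n₁ i j))
    (T : Finset (Fin n)) (hT : 2 ≤ T.card) :
    ((∑ j ∈ T, (T.filter fun i => i < j ∧ G.Adj i j).card : ℕ) : ℤ) ≤
      ((T.filter fun v : Fin n => (v : ℕ) < n₁).card : ℤ) +
        2 * (T.filter fun v : Fin n => ¬ (v : ℕ) < n₁).card +
        min 0 (((T.filter fun v : Fin n => (v : ℕ) < n₁).card : ℤ) - 3) := by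
  have hfib : ∀ j, (T.filter fun i => i < j ∧ G.Adj i j) =
      (T.filter fun i : Fin n => i < j ∧ relB n₁ i j) := fib_congr _ G hadj T
  simp only [hfib]
  set f := fun j => (T.filter fun i : Fin n => i < j ∧ relB n₁ i j).card with hfdef
  set T₁ := T.filter (fun v : Fin n => (v : ℕ) < n₁) with hT₁
  set T₂ := T.filter (fun v : Fin n => ¬ (v : ℕ) < n₁) with hT₂
  have hpart : T₁.card + T₂.card = T.card := Finset.card_filter_add_card_filter_not _
  have hsplit : ∑ j ∈ T, f j = ∑ j ∈ T₁, f j + ∑ j ∈ T₂, f j :=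
    (Finset.sum_filter_add_sum_filter_not T _ f).symm
  have e0 : T.sum f = ∑ j ∈ T₁, f j + ∑ j ∈ T₂, f j := hsplit
  set c₀ := (T.filter fun i : Fin n => (i : ℕ) < 2).card with hc₀def
  have hfib2 : ∀ j ∈ T₂, f j ≤ c₀ := by
    intro j hj
    simp only [hT₂, Finset.mem_filter] at hj
    apply Finset.card_le_card
    intro i hi
    simp only [Finset.mem_filter] at hi ⊢
    rcases hi.2.2 with ⟨h1, -⟩ | ⟨-, h2⟩
    · omega
    · exact ⟨hi.1, h2⟩
  have hc₀2 : c₀ ≤ 2 := by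
    apply card_le_two_of_val _ 0 1
    intro i hi
    simp only [Finset.mem_filter] at hi
    omega
  have hc₀1 : c₀ ≤ T₁.card := by
    apply Finset.card_le_card
    intro i hi
    simp only [hT₁, Finset.mem_filter] at hi ⊢
    exact ⟨hi.1, by omega⟩
  have hD : ∑ j ∈ T₂, f j ≤ T₂.card * c₀ := by
    have := Finset.sum_le_card_nsmul T₂ f c₀ hfib2
    simpa using this
  have hsub1 : ∀ j ∈ T₁, f j ≤ (T₁.filter fun i => i < j).card := by
    intro j hj
    simp only [hT₁, Finset.mem_filter] at hj
    apply Finset.card_le_card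
    intro i hi
    simp only [hT₁, Finset.mem_filter] at hi ⊢
    rcases hi.2.2 with ⟨-, h2 | ⟨h2, -⟩⟩ | ⟨h1, -⟩
    · exact ⟨⟨hi.1, by omega⟩, hi.2.1⟩
    · exact ⟨⟨hi.1, by omega⟩, hi.2.1⟩
    · omega
  rcases Nat.lt_or_ge T₁.card 3 with hk | hk
  · rw [min_eq_right (by push_cast; omega : ((T₁.card : ℤ) - 3) ≤ 0)]
    obtain hkc | hkc | hkc : T₁.card = 0 ∨ T₁.card = 1 ∨ T₁.card = 2 := by omega
    · have hT₁e : T₁ = ∅ := Finset.card_eq_zero.mp hkc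
      have h1 : ∑ j ∈ T₁, f j = 0 := by rw [hT₁e]; simp
      have h2 : ∑ j ∈ T₂, f j = 0 := by
        have hzero : c₀ = 0 := by omega
        rw [hzero, Nat.mul_zero] at hD
        omega
      omega
    · obtain ⟨a, hae⟩ := Finset.card_eq_one.mp hkc
      have h1 : ∑ j ∈ T₁, f j = 0 := by
        rw [hae, Finset.sum_singleton]
        have := hsub1 a (by rw [hae]; simp)
        have hz : (T₁.filter fun i => i < a).card = 0 := by
          rw [Finset.card_eq_zero, Finset.filter_eq_empty_iff]
          intro i hi
          rw [hae, Finset.mem_singleton] at hi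
          subst hi; exact lt_irrefl _
        omega
      have h2 : ∑ j ∈ T₂, f j ≤ T₂.card := by
        calc ∑ j ∈ T₂, f j ≤ T₂.card * c₀ := hD
          _ ≤ T₂.card * 1 := Nat.mul_le_mul_left _ (by omega)
          _ = T₂.card := by omega
      omega
    · obtain ⟨a, b, hab, hae⟩ := Finset.card_eq_two.mp hkc
      wlog hablt : a < b generalizing a b
      · exact this b a hab.symm (by rw [hae]; ext; simp; tauto)
          (lt_of_le_of_ne (le_of_not_gt hablt) (Ne.symm hab))
      have h1 : ∑ j ∈ T₁, f j ≤ 1 := by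
        rw [hae, Finset.sum_pair hab]
        have hfa : f a = 0 := by
          have := hsub1 a (by rw [hae]; simp)
          have hz : (T₁.filter fun i => i < a).card = 0 := by
            rw [Finset.card_eq_zero, Finset.filter_eq_empty_iff]
            intro i hi
            rw [hae, Finset.mem_insert, Finset.mem_singleton] at hi
            rcases hi with rfl | rfl
            · exact lt_irrefl _
            · exact fun hc => absurd (hc.trans hablt) (lt_irrefl _)
          omega
        have hfb : f b ≤ 1 := by
          have := hsub1 b (by rw [hae]; simp)
          have hz : (T₁.filter fun i => i < b).card ≤ 1 := by
            apply Finset.card_le_one.mpr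
            intro x hx y hy
            rw [Finset.mem_filter, hae, Finset.mem_insert, Finset.mem_singleton] at hx hy
            rcases hx.1 with rfl | rfl
            · rcases hy.1 with rfl | rfl
              · rfl
              · exact absurd hy.2 (lt_irrefl _)
            · exact absurd hx.2 (lt_irrefl _)
          omega
        omega
      have h2 : ∑ j ∈ T₂, f j ≤ 2 * T₂.card := by
        calc ∑ j ∈ T₂, f j ≤ T₂.card * c₀ := hD
          _ ≤ T₂.card * 2 := Nat.mul_le_mul_left _ hc₀2
          _ = 2 * T₂.card := by omega
      omega
  · rw [min_eq_left (by push_cast; omega : (0 : ℤ) ≤ (T₁.card : ℤ) - 3)]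
    have hT₁ne : T₁.Nonempty := Finset.card_pos.mp (by omega)
    set a := T₁.min' hT₁ne with ha
    have haT₁ : a ∈ T₁ := T₁.min'_mem hT₁ne
    have hfa : f a = 0 := by
      have := hsub1 a haT₁
      have hz : (T₁.filter fun i => i < a).card = 0 := by
        rw [Finset.card_eq_zero, Finset.filter_eq_empty_iff]
        intro i hi
        exact not_lt.mpr (T₁.min'_le i hi)
      omega
    have hrest : ∀ j ∈ T₁.erase a, f j ≤ 1 + (if (j : ℕ) = n₁ - 1 then 1 else 0) := by
      intro j hj
      have hjT₁ := Finset.mem_of_mem_erase hj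
      simp only [hT₁, Finset.mem_filter] at hjT₁
      by_cases hje : (j : ℕ) = n₁ - 1
      · rw [if_pos hje]
        refine le_trans (card_le_two_of_val _ ((j : ℕ) - 1) 0 ?_) (by norm_num)
        intro i hi
        simp only [Finset.mem_filter] at hi
        rcases hi.2.2 with ⟨-, h2 | ⟨h2, -⟩⟩ | ⟨h1, -⟩ <;> omega
      · rw [if_neg hje]
        refine le_trans (card_le_one_of_val _ ((j : ℕ) - 1) ?_) (by norm_num)
        intro i hi
        simp only [Finset.mem_filter] at hi
        have hij := hi.2.1
        rw [Fin.lt_def] at hij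
        rcases hi.2.2 with ⟨-, h2 | ⟨h2, h2'⟩⟩ | ⟨h1, -⟩ <;> omega
    have hCsum : ∑ j ∈ T₁, f j ≤ T₁.card := by
      rw [← Finset.add_sum_erase T₁ f haT₁, hfa, zero_add]
      calc ∑ j ∈ T₁.erase a, f j
          ≤ ∑ j ∈ T₁.erase a, (1 + if (j : ℕ) = n₁ - 1 then 1 else 0) :=
            Finset.sum_le_sum hrest
        _ = (T₁.erase a).card + ∑ j ∈ T₁.erase a, (if (j : ℕ) = n₁ - 1 then 1 else 0) := by
            rw [Finset.sum_add_distrib, Finset.sum_const, smul_eq_mul, mul_one]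
        _ ≤ (T₁.erase a).card + 1 := by
            have hcf : ∑ j ∈ T₁.erase a, (if (j : ℕ) = n₁ - 1 then 1 else 0)
                = ((T₁.erase a).filter fun j : Fin n => (j : ℕ) = n₁ - 1).card := by
              rw [Finset.card_filter]
            rw [hcf]
            have := card_le_one_of_val ((T₁.erase a).filter fun j : Fin n => (j : ℕ) = n₁ - 1)
              (n₁ - 1) (fun i hi => (Finset.mem_filter.mp hi).2)
            omega
        _ ≤ T₁.card := by
            rw [Finset.card_erase_of_mem haT₁]
            omega
    have h2 : ∑ j ∈ T₂, f j ≤ 2 * T₂.card := by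
      calc ∑ j ∈ T₂, f j ≤ T₂.card * c₀ := hD
        _ ≤ T₂.card * 2 := Nat.mul_le_mul_left _ hc₀2
        _ = 2 * T₂.card := by omega
    omega

lemma sum_g : ∀ m : ℕ, ∑ j ∈ Finset.range m, (if j = 0 then 0 else 1) = m - 1 := by
  intro m
  induction m with
  | zero => simp
  | succ m ih =>
    rw [Finset.sum_range_succ, ih]
    by_cases hm : m = 0
    · simp [hm]
    · rw [if_neg hm]; omega

def fB (n₁ : ℕ) : ℕ → ℕ := fun jv => if jv = 0 then 0 else if jv < n₁ - 1 then 1 else 2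

lemma caseB_total (n₁ n₂ : ℕ) (h3 : 3 ≤ n₁) (G : SimpleGraph (Fin (n₁ + n₂)))
    [DecidableRel G.Adj]
    (hadj : ∀ i j : Fin (n₁ + n₂), i < j → (G.Adj i j ↔ relB n₁ i j)) :
    ∑ j : Fin (n₁ + n₂), (Finset.univ.filter fun i => i < j ∧ G.Adj i j).card
      = n₁ + 2 * n₂ := by
  have hfib : ∀ j, (Finset.univ.filter fun i => i < j ∧ G.Adj i j) =
      (Finset.univ.filter fun i => i < j ∧ relB n₁ i j) := fib_congr _ G hadj Finset.univ
  have key : ∀ j : Fin (n₁ + n₂),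
      (Finset.univ.filter fun i => i < j ∧ G.Adj i j).card = fB n₁ (j : ℕ) := by
    intro j
    rw [hfib j]
    by_cases h0 : (j : ℕ) = 0
    · rw [show fB n₁ (j : ℕ) = 0 from by simp [fB, h0]]
      rw [Finset.card_eq_zero, Finset.filter_eq_empty_iff]
      rintro i - ⟨hlt, -⟩
      rw [Fin.lt_def] at hlt; omega
    · by_cases h1 : (j : ℕ) < n₁ - 1
      · have : (Finset.univ.filter fun i => i < j ∧ relB n₁ i j)
            = {(⟨(j : ℕ) - 1, by omega⟩ : Fin (n₁ + n₂))} := by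
          ext i
          simp only [Finset.mem_filter, Finset.mem_univ, true_and, Finset.mem_singleton,
            relB, Fin.ext_iff, Fin.lt_def]
          omega
        rw [this, Finset.card_singleton]
        simp only [fB]
        rw [if_neg h0, if_pos h1]
      · by_cases h2 : (j : ℕ) < n₁
        · have : (Finset.univ.filter fun i => i < j ∧ relB n₁ i j)
              = {(⟨(j : ℕ) - 1, by omega⟩ : Fin (n₁ + n₂)), ⟨0, by omega⟩} := by
            ext i
            simp only [Finset.mem_filter, Finset.mem_univ, true_and, Finset.mem_insert,
              Finset.mem_singleton, relB, Fin.ext_iff, Fin.lt_def]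
            omega
          rw [this, Finset.card_insert_of_notMem (by simp [Fin.ext_iff]; omega),
            Finset.card_singleton]
          simp only [fB]
          rw [if_neg h0, if_neg h1]
        · have : (Finset.univ.filter fun i => i < j ∧ relB n₁ i j)
              = {(⟨0, by omega⟩ : Fin (n₁ + n₂)), ⟨1, by omega⟩} := by
            ext i
            simp only [Finset.mem_filter, Finset.mem_univ, true_and, Finset.mem_insert,
              Finset.mem_singleton, relB, Fin.ext_iff, Fin.lt_def]
            omega
          rw [this, Finset.card_insert_of_notMem (by simp [Fin.ext_iff]),
            Finset.card_singleton]
          simp only [fB]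
          rw [if_neg h0, if_neg (by omega)]
  calc ∑ j : Fin (n₁ + n₂), (Finset.univ.filter fun i => i < j ∧ G.Adj i j).card
      = ∑ j : Fin (n₁ + n₂), fB n₁ (j : ℕ) := Finset.sum_congr rfl fun j _ => key j
    _ = ∑ j ∈ Finset.range (n₁ + n₂), fB n₁ j := Fin.sum_univ_eq_sum_range _ (n₁ + n₂)
    _ = ∑ j ∈ Finset.range n₁, fB n₁ j + ∑ j ∈ Finset.Ico n₁ (n₁ + n₂), fB n₁ j := by
        rw [Finset.range_eq_Ico, ← Finset.sum_Ico_consecutive _ (Nat.zero_le n₁) (by omega),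
          ← Finset.range_eq_Ico]
    _ = n₁ + 2 * n₂ := by
        have hA : ∑ j ∈ Finset.range n₁, fB n₁ j = n₁ := by
          rw [show Finset.range n₁ = Finset.range ((n₁ - 1) + 1) from by congr 1; omega,
            Finset.sum_range_succ]
          have hlast : fB n₁ (n₁ - 1) = 2 := by
            simp only [fB]
            rw [if_neg (by omega), if_neg (by omega)]
          have hrest : ∑ j ∈ Finset.range (n₁ - 1), fB n₁ j
              = ∑ j ∈ Finset.range (n₁ - 1), (if j = 0 then 0 else 1) := by
            apply Finset.sum_congr rfl
            intro j hj
            rw [Finset.mem_range] at hj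
            simp only [fB]
            by_cases hj0 : j = 0
            · simp [hj0]
            · rw [if_neg hj0, if_pos hj, if_neg hj0]
          rw [hlast, hrest, sum_g]
          omega
        have hB : ∑ j ∈ Finset.Ico n₁ (n₁ + n₂), fB n₁ j = 2 * n₂ := by
          have hc : ∀ j ∈ Finset.Ico n₁ (n₁ + n₂), fB n₁ j = 2 := by
            intro j hj
            rw [Finset.mem_Ico] at hj
            simp only [fB]
            rw [if_neg (by omega), if_neg (by omega)]
          rw [Finset.sum_congr rfl hc, Finset.sum_const, Nat.card_Ico, smul_eq_mul]
          omega
        omega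

end Aux

/-- For all `n₁, n₂` with `n₁ + n₂ ≥ 2` there is a minimally rigid graph on
`n₁` type-1 vertices and `n₂` type-2 vertices. -/
theorem stmt9 (n₁ n₂ : ℕ) (h : 2 ≤ n₁ + n₂) :
    ∃ G : SimpleGraph (Fin (n₁ + n₂)), MinRigid G (fun v => (v : ℕ) < n₁) := by
  set t1 : Fin (n₁ + n₂) → Prop := fun v => (v : ℕ) < n₁ with ht1
  have hn1univ : n1 t1 Set.univ = n₁ := by
    rw [← Finset.coe_univ, n1_coe]
    exact filter_lt_card n₁ (Nat.le_add_right _ _)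
  have hn2univ : n2 t1 Set.univ = n₂ := by
    rw [← Finset.coe_univ, n2_coe]
    have hp := Finset.card_filter_add_card_filter_not
      (s := (Finset.univ : Finset (Fin (n₁ + n₂)))) (p := t1)
    have h1 : (Finset.univ.filter t1).card = n₁ := filter_lt_card n₁ (Nat.le_add_right _ _)
    have hu : (Finset.univ : Finset (Fin (n₁ + n₂))).card = n₁ + n₂ := by
      simp
    omega
  by_cases h3 : 3 ≤ n₁
  · -- cycle on the type-1 vertices, each type-2 vertex joined to vertices 0 and 1
    set G := SimpleGraph.fromRel (relB n₁ (n := n₁ + n₂)) with hG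
    letI : DecidableRel G.Adj :=
      fun a b => decidable_of_iff _ (SimpleGraph.fromRel_adj _ a b).symm
    have hadj : ∀ i j : Fin (n₁ + n₂), i < j → (G.Adj i j ↔ relB n₁ i j) :=
      fun i j hij => fromRel_adj_of_lt _ (relB_lt h3) hij
    refine ⟨G, Or.inr ⟨?_, ?_⟩⟩
    · exact sparse_of G t1 fun T hT => caseB_bound h3 G hadj T hT
    · have hE : G.edgeSet.ncard = n₁ + 2 * n₂ := by
        rw [edgesIn_univ_eq, ← Finset.coe_univ, edgesIn_eq]
        exact caseB_total n₁ n₂ h3 G hadj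
      rw [hE, hn1univ, hn2univ,
        min_eq_left (by push_cast; omega : (0 : ℤ) ≤ (n₁ : ℤ) - 3)]
      push_cast
      ring
  · -- the strip graph: all pairs at distance at most two are joined
    set G := SimpleGraph.fromRel (relA (n₁ + n₂)) with hG
    letI : DecidableRel G.Adj :=
      fun a b => decidable_of_iff _ (SimpleGraph.fromRel_adj _ a b).symm
    have hadj : ∀ i j : Fin (n₁ + n₂), i < j → (G.Adj i j ↔ relA (n₁ + n₂) i j) :=
      fun i j hij => fromRel_adj_of_lt _ relA_lt hij
    refine ⟨G, Or.inr ⟨?_, ?_⟩⟩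
    · apply sparse_of G t1
      intro T hT
      have hb := caseA_bound G hadj T hT
      have hk1 : (T.filter t1).card ≤ n₁ := by
        have hsub : T.filter t1 ⊆ Finset.univ.filter t1 :=
          Finset.filter_subset_filter _ (Finset.subset_univ T)
        have := Finset.card_le_card hsub
        have h1 : (Finset.univ.filter t1).card = n₁ := filter_lt_card n₁ (Nat.le_add_right _ _)
        omega
      have hpart : (T.filter t1).card + (T.filter fun v => ¬ t1 v).card = T.card :=
        Finset.card_filter_add_card_filter_not _
      rw [min_eq_right (by push_cast; omega : ((T.filter t1).card : ℤ) - 3 ≤ 0)]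
      omega
    · have hE : G.edgeSet.ncard = 2 * (n₁ + n₂) - 3 := by
        rw [edgesIn_univ_eq, ← Finset.coe_univ, edgesIn_eq]
        exact caseA_total G hadj h
      rw [hE, hn1univ, hn2univ,
        min_eq_right (by push_cast; omega : ((n₁ : ℤ)) - 3 ≤ 0)]
      omega
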